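/- Every evenly varying infinite NCIFS belongs to the class 𝓜. That is, if Φ is an infinite NCIFS for which there exist positive reals (γ_i)_{i∈ℕ} and c ≥ 1 with γ_i/c ≤ ‖Dφ_i^(n)‖ ≤ c·γ_i for all i, n, then for every t ∈ (0,d): (a) the sums Z_1^(n)(t) = Σ_i ‖Dφ_i^(n)‖^t are either all finite or all infinite; (b) if finite, then Σ_{i ≤ m} ‖Dφ_i^(n)‖^t / Z_1^(n)(t) → 1 uniformly in n as m → ∞; (c) if infinite, then Σ_{i ≤ m} ‖Dφ_i^(n)‖^t → ∞ uniformly in n as m → ∞. -/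

import Mathlib

/-- Every evenly varying infinite NCIFS belongs to the class `𝓜`. Here
`D n i = ‖Dφ_i^{(n)}‖` are the derivative norms of an infinite system (alphabet `ℕ` at every
level), and even variation means `γ_i/c ≤ D n i ≤ c·γ_i` for some positive reals `(γ_i)` and
some `c ≥ 1`. Then for every `t ∈ (0,d)`: (a) the level sums `Σ_i (D n i)^t` are all finite or
all infinite; (b) if finite, the partial sums over `i < m`, divided by the full sum, tend to `1`
uniformly in `n` as `m → ∞`; (c) if infinite, the partial sums tend to `∞` uniformly in `n`. -/
theorem evenly_varying_mem_class_M (d : ℕ) (D : ℕ → ℕ → ℝ) (hDpos : ∀ n i, 0 < D n i)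
    (γ : ℕ → ℝ) (hγ : ∀ i, 0 < γ i) (c : ℝ) (hc : 1 ≤ c)
    (hlow : ∀ n i, γ i / c ≤ D n i) (hup : ∀ n i, D n i ≤ c * γ i)
    (t : ℝ) (ht : 0 < t) (htd : t < d) :
    ((∀ n, Summable (fun i => D n i ^ t)) ∨ (∀ n, ¬ Summable (fun i => D n i ^ t))) ∧
    ((∀ n, Summable (fun i => D n i ^ t)) →
      ∀ ε : ℝ, 0 < ε → ∃ M : ℕ, ∀ m ≥ M, ∀ n,
        |(∑ i ∈ Finset.range m, D n i ^ t) / (∑' i, D n i ^ t) - 1| < ε) ∧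
    ((∀ n, ¬ Summable (fun i => D n i ^ t)) →
      ∀ C : ℝ, ∃ M : ℕ, ∀ m ≥ M, ∀ n, C ≤ ∑ i ∈ Finset.range m, D n i ^ t) := by
  have hc0 : (0:ℝ) < c := lt_of_lt_of_le one_pos hc
  have hct : (0:ℝ) < c ^ t := Real.rpow_pos_of_pos hc0 t
  set g : ℕ → ℝ := fun i => γ i ^ t with hg_def
  have hgpos : ∀ i, 0 < g i := fun i => Real.rpow_pos_of_pos (hγ i) t
  have hgnn : ∀ i, 0 ≤ g i := fun i => (hgpos i).le
  have hDnn : ∀ n i, 0 ≤ D n i ^ t := fun n i => (Real.rpow_pos_of_pos (hDpos n i) t).le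
  have hDt_le : ∀ n i, D n i ^ t ≤ c ^ t * g i := by
    intro n i
    have h := Real.rpow_le_rpow (hDpos n i).le (hup n i) ht.le
    rwa [Real.mul_rpow hc0.le (hγ i).le] at h
  have hDt_ge : ∀ n i, g i / c ^ t ≤ D n i ^ t := by
    intro n i
    have h := Real.rpow_le_rpow (div_pos (hγ i) hc0).le (hlow n i) ht.le
    rwa [Real.div_rpow (hγ i).le hc0.le] at h
  by_cases hg : Summable g
  · -- summable case
    have hall : ∀ n, Summable (fun i => D n i ^ t) := by
      intro n
      exact Summable.of_nonneg_of_le (fun i => hDnn n i) (fun i => hDt_le n i)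
        (hg.mul_left (c ^ t))
    refine ⟨Or.inl hall, ?_, ?_⟩
    · intro _ ε hε
      set S : ℝ := ∑' i, g i with hS_def
      have hS : 0 < S := Summable.tsum_pos hg hgnn 0 (hgpos 0)
      set δ : ℝ := ε * S / (c ^ t * c ^ t) with hδ_def
      have hδ : 0 < δ := by positivity
      have htail : Filter.Tendsto (fun m => S - ∑ i ∈ Finset.range m, g i)
          Filter.atTop (nhds 0) := by
        have := hg.hasSum.tendsto_sum_nat
        have h2 := (tendsto_const_nhds (x := S) (f := Filter.atTop)).sub this
        simpa [hS_def] using h2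
      have hev : ∀ᶠ m in Filter.atTop, S - ∑ i ∈ Finset.range m, g i < δ :=
        htail.eventually (gt_mem_nhds hδ)
      obtain ⟨M, hM⟩ := hev.exists_forall_of_atTop
      refine ⟨M, fun m hm n => ?_⟩
      have hDsum := hall n
      set P : ℝ := ∑ i ∈ Finset.range m, D n i ^ t with hP_def
      set T : ℝ := ∑' i, D n i ^ t with hT_def
      have hPT : P ≤ T := Summable.sum_le_tsum (Finset.range m) (fun i _ => hDnn n i) hDsum
      have hTlb : S / c ^ t ≤ T := by
        have h1 : Summable (fun i => g i / c ^ t) := hg.div_const _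
        have h2 : ∑' i, g i / c ^ t ≤ T := Summable.tsum_le_tsum (fun i => hDt_ge n i) h1 hDsum
        rwa [tsum_div_const] at h2
      have hT : 0 < T := lt_of_lt_of_le (by positivity) hTlb
      -- tail estimate
      have hDtail : Summable (fun i => D n (i + m) ^ t) := (summable_nat_add_iff m).mpr hDsum
      have hgtail : Summable (fun i => g (i + m)) := (summable_nat_add_iff m).mpr hg
      have hsplitD : P + ∑' i, D n (i + m) ^ t = T := Summable.sum_add_tsum_nat_add m hDsum
      have hsplitg : (∑ i ∈ Finset.range m, g i) + ∑' i, g (i + m) = S :=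
        Summable.sum_add_tsum_nat_add m hg
      have htail_le : ∑' i, D n (i + m) ^ t ≤ c ^ t * ∑' i, g (i + m) := by
        have := Summable.tsum_le_tsum (fun i => hDt_le n (i + m)) hDtail (hgtail.mul_left (c ^ t))
        rwa [tsum_mul_left] at this
      have hgm : S - ∑ i ∈ Finset.range m, g i < δ := hM m hm
      have hkey : T - P < ε * T := by
        have h1 : T - P ≤ c ^ t * (S - ∑ i ∈ Finset.range m, g i) := by
          have : ∑' i, g (i + m) = S - ∑ i ∈ Finset.range m, g i := by linarith
          rw [← this]; linarith
        have h2 : c ^ t * (S - ∑ i ∈ Finset.range m, g i) < c ^ t * δ :=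
          (mul_lt_mul_iff_right₀ hct).mpr hgm
        have h3 : c ^ t * δ = ε * (S / c ^ t) := by
          rw [hδ_def]; field_simp
        have h4 : ε * (S / c ^ t) ≤ ε * T := mul_le_mul_of_nonneg_left hTlb hε.le
        linarith
      have hdivle : P / T ≤ 1 := (div_le_one hT).mpr hPT
      rw [abs_of_nonpos (by linarith)]
      have : 1 - P / T < ε := by
        rw [sub_lt_iff_lt_add, ← sub_lt_iff_lt_add']
        calc 1 - ε < P / T := by
              rw [lt_div_iff₀ hT]; nlinarith
          _ ≤ P / T := le_refl _
      linarith
    · intro hns _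
      exact absurd (hall 0) (hns 0)
  · -- non-summable case
    have hnone : ∀ n, ¬ Summable (fun i => D n i ^ t) := by
      intro n hsum
      apply hg
      have : Summable (fun i => c ^ t * D n i ^ t) := hsum.mul_left _
      refine Summable.of_nonneg_of_le hgnn (fun i => ?_) this
      have := hDt_ge n i
      rw [div_le_iff₀ hct] at this
      linarith
    refine ⟨Or.inr hnone, ?_, ?_⟩
    · intro hall
      exact absurd (hall 0) (hnone 0)
    · intro _ C
      have hgtop : Filter.Tendsto (fun m => ∑ i ∈ Finset.range m, g i)
          Filter.atTop Filter.atTop :=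
        (not_summable_iff_tendsto_nat_atTop_of_nonneg hgnn).mp hg
      obtain ⟨M, hM⟩ := (hgtop.eventually_ge_atTop (C * c ^ t)).exists_forall_of_atTop
      refine ⟨M, fun m hm n => ?_⟩
      have h1 : (∑ i ∈ Finset.range m, g i) / c ^ t ≤ ∑ i ∈ Finset.range m, D n i ^ t := by
        rw [div_le_iff₀ hct, Finset.sum_mul]
        refine Finset.sum_le_sum fun i _ => ?_
        have := hDt_ge n i
        rw [div_le_iff₀ hct] at this
        linarith
      have h2 : C ≤ (∑ i ∈ Finset.range m, g i) / c ^ t := by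
        rw [le_div_iff₀ hct]
        exact hM m hm
      linarith
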